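/- With the notation of the previous context, if v_r attains the maximum of v ↦ p·v + (1/2) v·Av over the sphere |v| = r, and w_r := r p/|p|, then |w_r − v_r| ≤ 2 r² ‖A‖ |p|⁻¹. -/

import Mathlib

open scoped RealInnerProductSpace

/-- If `v_r` attains the maximum of `v ↦ p·v + (1/2) v·Av` over the sphere `|v| = r`,
and `w_r := r p/|p|`, then `|w_r − v_r| ≤ 2 r² ‖A‖ |p|⁻¹`. -/
theorem sphere_quadratic_maximizer_close_to_gradient_direction {d : ℕ}
    (p : EuclideanSpace ℝ (Fin d)) (hp : p ≠ 0)
    (A : EuclideanSpace ℝ (Fin d) →L[ℝ] EuclideanSpace ℝ (Fin d))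
    (r : ℝ) (hr : 0 < r) (vr : EuclideanSpace ℝ (Fin d))
    (hvr : ‖vr‖ = r)
    (hmax : ∀ v : EuclideanSpace ℝ (Fin d), ‖v‖ = r →
      ⟪p, v⟫ + (1 / 2) * ⟪v, A v⟫ ≤ ⟪p, vr⟫ + (1 / 2) * ⟪vr, A vr⟫) :
    ‖(r / ‖p‖) • p - vr‖ ≤ 2 * r ^ 2 * ‖A‖ * ‖p‖⁻¹ := by
  have hpn : (0:ℝ) < ‖p‖ := norm_pos_iff.mpr hp
  set w : EuclideanSpace ℝ (Fin d) := (r / ‖p‖) • p with hwdef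
  have hw : ‖w‖ = r := by
    rw [hwdef, norm_smul, Real.norm_eq_abs, abs_of_pos (by positivity)]
    field_simp
  have hkey := hmax w hw
  -- p = (‖p‖ / r) • w
  have hpw : p = (‖p‖ / r) • w := by
    rw [hwdef, smul_smul]
    rw [div_mul_div_comm, mul_comm, div_self (by positivity), one_smul]
  -- inner p (w - vr) = (‖p‖/r) * ⟪w, w - vr⟫
  have h1 : ⟪p, w - vr⟫ = (‖p‖ / r) * ⟪w, w - vr⟫ := by
    conv_lhs => rw [hpw]
    rw [real_inner_smul_left]
  -- ⟪w, w - vr⟫ = ½ ‖w - vr‖²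
  have h2 : ⟪w, w - vr⟫ = (1/2) * ‖w - vr‖^2 := by
    have := @norm_sub_sq_real (EuclideanSpace ℝ (Fin d)) _ _ w vr
    have hwi : ⟪w, w⟫ = r^2 := by
      rw [real_inner_self_eq_norm_sq, hw]
    rw [inner_sub_right, hwi]
    rw [this, hw, hvr]
    ring
  -- from maximality
  have h3 : ⟪p, w⟫ - ⟪p, vr⟫ ≤ (1/2) * (⟪vr, A vr⟫ - ⟪w, A w⟫) := by
    nlinarith [hkey]
  have h4 : ⟪vr, A vr⟫ - ⟪w, A w⟫ ≤ 2 * ‖A‖ * r * ‖w - vr‖ := by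
    have e : ⟪vr, A vr⟫ - ⟪w, A w⟫ = ⟪vr - w, A vr⟫ + ⟪w, A vr - A w⟫ := by
      rw [inner_sub_left, inner_sub_right]; ring
    have c1 : ⟪vr - w, A vr⟫ ≤ ‖vr - w‖ * (‖A‖ * r) := by
      calc ⟪vr - w, A vr⟫ ≤ ‖vr - w‖ * ‖A vr‖ := real_inner_le_norm _ _
        _ ≤ ‖vr - w‖ * (‖A‖ * r) := by
            have := A.le_opNorm vr
            rw [hvr] at this
            exact mul_le_mul_of_nonneg_left this (norm_nonneg _)
    have c2 : ⟪w, A vr - A w⟫ ≤ r * (‖A‖ * ‖vr - w‖) := by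
      calc ⟪w, A vr - A w⟫ ≤ ‖w‖ * ‖A vr - A w‖ := real_inner_le_norm _ _
        _ ≤ r * (‖A‖ * ‖vr - w‖) := by
            rw [hw]
            have : ‖A vr - A w‖ ≤ ‖A‖ * ‖vr - w‖ := by
              have := A.le_opNorm (vr - w)
              rwa [map_sub] at this
            exact mul_le_mul_of_nonneg_left this hr.le
    have hn : ‖vr - w‖ = ‖w - vr‖ := norm_sub_rev _ _
    rw [e]
    rw [hn] at c1 c2
    nlinarith [c1, c2]
  -- combine
  have h5 : ⟪p, w - vr⟫ ≤ ‖A‖ * r * ‖w - vr‖ := by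
    rw [inner_sub_right]
    nlinarith [h3, h4]
  rw [h1, h2] at h5
  -- (‖p‖/r) * ½ ‖u‖² ≤ ‖A‖ r ‖u‖
  have hnn : (0:ℝ) ≤ ‖w - vr‖ := norm_nonneg _
  rcases eq_or_lt_of_le hnn with h0 | h0
  · rw [← h0]; positivity
  · have key : ‖w - vr‖ * ‖p‖ ≤ 2 * r ^ 2 * ‖A‖ := by
      have h5' : ‖p‖ * ‖w - vr‖ ^ 2 ≤ 2 * ‖A‖ * r ^ 2 * ‖w - vr‖ := by
        have h6 := mul_le_mul_of_nonneg_left h5 (by positivity : (0:ℝ) ≤ 2 * r)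
        have he : 2 * r * (‖p‖ / r * (1 / 2 * ‖w - vr‖ ^ 2)) = ‖p‖ * ‖w - vr‖ ^ 2 := by
          field_simp
        rw [he] at h6
        nlinarith [h6]
      nlinarith [h5', h0]
    calc ‖w - vr‖ = (‖w - vr‖ * ‖p‖) * ‖p‖⁻¹ := by field_simp
      _ ≤ 2 * r ^ 2 * ‖A‖ * ‖p‖⁻¹ :=
          mul_le_mul_of_nonneg_right key (by positivity)
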